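/- For every odd prime p with p ≥ 5, the Toeplitz graph T_{2p}⟨{2, p}⟩ satisfies 2p/(2p−1) ≤ ldim_f(T_{2p}⟨{2, p}⟩) ≤ 2p/(2p−2) = p/(p−1). -/

import Mathlib

open Finset

/-- A local resolving function of a graph `G`: a map `ζ : V → [0,1]` such that for every
pair of adjacent vertices `u v`, the sum of `ζ` over the local resolving neighborhood
`R{u,v} = {w : d(w,u) ≠ d(w,v)}` is at least `1`. -/
def IsLocalResolvingFunction {V : Type*} [Fintype V] (G : SimpleGraph V) (ζ : V → ℝ) : Prop :=
  (∀ w, ζ w ∈ Set.Icc (0 : ℝ) 1) ∧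
    ∀ u v, G.Adj u v →
      1 ≤ ∑ w ∈ Finset.univ.filter (fun w => G.dist w u ≠ G.dist w v), ζ w

/-- The local fractional metric dimension of `G`: the minimum of `∑ v, ζ v` over all
local resolving functions `ζ` of `G`. -/
noncomputable def ldimf {V : Type*} [Fintype V] (G : SimpleGraph V) : ℝ :=
  sInf {s : ℝ | ∃ ζ : V → ℝ, IsLocalResolvingFunction G ζ ∧ s = ∑ v, ζ v}

/-- The Toeplitz graph `T_n⟨S⟩` (vertices `0, …, n-1` standing for `1, …, n`):
two distinct vertices are adjacent iff their absolute difference lies in `S`. -/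
def toeplitzGraph (n : ℕ) (S : Set ℕ) : SimpleGraph (Fin n) where
  Adj p q := p ≠ q ∧ Nat.dist (p : ℕ) (q : ℕ) ∈ S
  symm := ⟨fun p q ⟨h1, h2⟩ => ⟨h1.symm, by rwa [Nat.dist_comm]⟩⟩
  loopless := ⟨fun p ⟨h, _⟩ => h rfl⟩

namespace TPaux

variable {p : ℕ}

/-- distance formula value -/
def F (p k : ℕ) : ℕ := if k % 2 = 0 then min (k/2) (p + 2 - k/2) else Nat.dist k p / 2 + 1

lemma adj_iff {a b : Fin (2*p)} :
    (toeplitzGraph (2*p) {2, p}).Adj a b ↔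
      a ≠ b ∧ (Nat.dist (a:ℕ) (b:ℕ) = 2 ∨ Nat.dist (a:ℕ) (b:ℕ) = p) := by
  simp [toeplitzGraph, Set.mem_insert_iff, Set.mem_singleton_iff]

lemma adj_of (h5 : 5 ≤ p) {a b : Fin (2*p)}
    (h : Nat.dist (a:ℕ) (b:ℕ) = 2 ∨ Nat.dist (a:ℕ) (b:ℕ) = p) :
    (toeplitzGraph (2*p) {2, p}).Adj a b := by
  refine adj_iff.mpr ⟨?_, h⟩
  intro hab
  subst hab
  simp [Nat.dist_self] at h
  omega

/-- chain of +2 steps -/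
lemma walk_chain (h5 : 5 ≤ p) :
    ∀ (m a b : ℕ) (ha : a < 2*p) (hb : b < 2*p), b = a + 2*m →
      ∃ w : (toeplitzGraph (2*p) {2, p}).Walk ⟨a, ha⟩ ⟨b, hb⟩, w.length = m := by
  intro m
  induction m with
  | zero =>
    intro a b ha hb hab
    have : a = b := by omega
    subst this
    exact ⟨.nil, rfl⟩
  | succ n ih =>
    intro a b ha hb hab
    have h2 : a + 2 < 2*p := by omega
    obtain ⟨w, hw⟩ := ih (a+2) b h2 hb (by omega)
    refine ⟨.cons (adj_of h5 (a := ⟨a, ha⟩) (b := ⟨a+2, h2⟩) ?_) w, by simp [hw]⟩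
    left
    simp only [Nat.dist]
    omega

end TPaux

namespace Part2
open TPaux
variable {p : ℕ}

abbrev GG (p : ℕ) := toeplitzGraph (2*p) {2, p}

lemma exists_walk_le (h5 : 5 ≤ p) (hpo : p % 2 = 1) (a b : ℕ) (ha : a < 2*p) (hb : b < 2*p)
    (hab : a ≤ b) : ∃ w : (GG p).Walk ⟨a, ha⟩ ⟨b, hb⟩, w.length ≤ F p (b - a) := by
  set k := b - a with hk
  by_cases hpar : k % 2 = 0
  · -- even
    have hm : b = a + 2 * (k/2) := by omega
    by_cases hbig : 2 * (k/2) ≤ p + 2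
    · obtain ⟨w, hw⟩ := walk_chain h5 (k/2) a b ha hb hm
      exact ⟨w, by rw [hw]; simp [F, hpar]; omega⟩
    · -- route via two p-steps : a → a+p → … → b-p → b
      have hap : a + p < 2*p := by omega
      have hbp : b - p < 2*p := by omega
      obtain ⟨w2, hw2⟩ := walk_chain h5 (p - k/2) (b - p) (a + p) hbp hap (by omega)
      have adj1 : (GG p).Adj ⟨a, ha⟩ ⟨a + p, hap⟩ := by
        apply adj_of h5; right; simp only [Nat.dist]; omega
      have adj2 : (GG p).Adj ⟨b - p, hbp⟩ ⟨b, hb⟩ := by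
        apply adj_of h5; right; simp only [Nat.dist]; omega
      refine ⟨.cons adj1 ((w2.reverse).concat adj2), ?_⟩
      simp [SimpleGraph.Walk.length_concat, hw2, F, hpar]
      omega
  · -- odd
    rcases lt_trichotomy k p with hkp | hkp | hkp
    · by_cases hap : a + p < 2*p
      · obtain ⟨w2, hw2⟩ := walk_chain h5 ((p - k)/2) b (a + p) hb hap (by omega)
        have adj1 : (GG p).Adj ⟨a, ha⟩ ⟨a + p, hap⟩ := by
          apply adj_of h5; right; simp only [Nat.dist]; omega
        refine ⟨.cons adj1 w2.reverse, ?_⟩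
        simp [hw2, F, hpar, Nat.dist]
        omega
      · have hbp : b - p < 2*p := by omega
        obtain ⟨w2, hw2⟩ := walk_chain h5 ((p - k)/2) (b - p) a hbp ha (by omega)
        have adj2 : (GG p).Adj ⟨b - p, hbp⟩ ⟨b, hb⟩ := by
          apply adj_of h5; right; simp only [Nat.dist]; omega
        refine ⟨(w2.reverse).concat adj2, ?_⟩
        simp [SimpleGraph.Walk.length_concat, hw2, F, hpar, Nat.dist]
        omega
    · have adj1 : (GG p).Adj ⟨a, ha⟩ ⟨b, hb⟩ := by
        apply adj_of h5; right; simp only [Nat.dist]; omega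
      refine ⟨.cons adj1 .nil, ?_⟩
      simp [F, hpar, Nat.dist]
      try omega
    · have hap : a + p < 2*p := by omega
      obtain ⟨w2, hw2⟩ := walk_chain h5 ((k - p)/2) (a + p) b hap hb (by omega)
      have adj1 : (GG p).Adj ⟨a, ha⟩ ⟨a + p, hap⟩ := by
        apply adj_of h5; right; simp only [Nat.dist]; omega
      refine ⟨.cons adj1 w2, ?_⟩
      simp [hw2, F, hpar, Nat.dist]
      omega

lemma exists_walk (h5 : 5 ≤ p) (hpo : p % 2 = 1) (a b : Fin (2*p)) :
    ∃ w : (GG p).Walk a b, w.length ≤ F p (Nat.dist (a:ℕ) (b:ℕ)) := by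
  rcases le_total (a:ℕ) (b:ℕ) with hab | hab
  · obtain ⟨w, hw⟩ := exists_walk_le h5 hpo a b a.isLt b.isLt hab
    rw [Nat.dist_eq_sub_of_le hab]
    exact ⟨w, hw⟩
  · obtain ⟨w, hw⟩ := exists_walk_le h5 hpo b a b.isLt a.isLt hab
    rw [Nat.dist_comm, Nat.dist_eq_sub_of_le hab]
    exact ⟨w.reverse, by simpa using hw⟩

lemma dist_le_F (h5 : 5 ≤ p) (hpo : p % 2 = 1) (a b : Fin (2*p)) :
    (GG p).dist a b ≤ F p (Nat.dist (a:ℕ) (b:ℕ)) := by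
  obtain ⟨w, hw⟩ := exists_walk h5 hpo a b
  exact le_trans (SimpleGraph.dist_le w) hw

lemma reachable (h5 : 5 ≤ p) (hpo : p % 2 = 1) (a b : Fin (2*p)) : (GG p).Reachable a b := by
  obtain ⟨w, -⟩ := exists_walk h5 hpo a b
  exact ⟨w⟩

end Part2

namespace Part3
open TPaux Part2
variable {p : ℕ}

lemma walk_rep (h5 : 5 ≤ p) {a b : Fin (2*p)} (w : (GG p).Walk a b) :
    ∃ s t : ℤ, (b:ℤ) - (a:ℤ) = 2*s + (p:ℤ)*t ∧ s.natAbs + t.natAbs ≤ w.length := by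
  induction w with
  | nil => exact ⟨0, 0, by ring, by simp⟩
  | @cons a c b h w ih =>
    obtain ⟨s, t, hst, hlen⟩ := ih
    obtain ⟨-, h2⟩ := adj_iff.mp h
    have hca : ((c:ℕ):ℤ) - ((a:ℕ):ℤ) = 2 ∨ ((c:ℕ):ℤ) - ((a:ℕ):ℤ) = -2 ∨
        ((c:ℕ):ℤ) - ((a:ℕ):ℤ) = (p:ℤ) ∨ ((c:ℕ):ℤ) - ((a:ℕ):ℤ) = -(p:ℤ) := by
      simp only [Nat.dist] at h2
      omega
    rcases hca with h' | h' | h' | h'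
    · exact ⟨s + 1, t, by push_cast; omega, by simp only [SimpleGraph.Walk.length_cons]; omega⟩
    · exact ⟨s - 1, t, by push_cast; omega, by simp only [SimpleGraph.Walk.length_cons]; omega⟩
    · refine ⟨s, t + 1, by push_cast at hst ⊢; linarith, by simp only [SimpleGraph.Walk.length_cons]; omega⟩
    · refine ⟨s, t - 1, by push_cast at hst ⊢; linarith, by simp only [SimpleGraph.Walk.length_cons]; omega⟩

lemma arith (h5 : 5 ≤ p) (hpo : p % 2 = 1) (d s t : ℤ) (hd : d = 2*s + (p:ℤ)*t)
    (hk : d.natAbs < 2*p) : F p d.natAbs ≤ s.natAbs + t.natAbs := by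
  obtain ⟨j, hj | hj⟩ : ∃ j : ℕ, t = (j:ℤ) ∨ t = -(j:ℤ) :=
    ⟨t.natAbs, by rcases Int.natAbs_eq t with h | h <;> [left; right] <;> omega⟩
  all_goals (
    rcases Nat.lt_or_ge j 3 with hj3 | hj3
    · interval_cases j <;>
        (subst hj; push_cast at hd; simp only [F, Nat.dist]; split_ifs with hpar <;> omega)
    · have hpj : 3 * (p:ℤ) ≤ (p:ℤ) * j := by
        have h1 : (3:ℤ) ≤ (j:ℤ) := by exact_mod_cast hj3
        have h2 : (0:ℤ) ≤ (p:ℤ) := by positivity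
        nlinarith
      subst hj
      push_cast at hd
      try simp only [mul_neg] at hd
      simp only [F, Nat.dist]
      split_ifs with hpar <;> omega)

lemma F_le_dist (h5 : 5 ≤ p) (hpo : p % 2 = 1) (a b : Fin (2*p)) :
    F p (Nat.dist (a:ℕ) (b:ℕ)) ≤ (GG p).dist a b := by
  obtain ⟨w, hw⟩ := (reachable h5 hpo a b).exists_walk_length_eq_dist
  obtain ⟨s, t, hst, hlen⟩ := walk_rep h5 w
  have hna : ((b:ℤ) - (a:ℤ)).natAbs = Nat.dist (a:ℕ) (b:ℕ) := by
    simp only [Nat.dist]; omega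
  have hk : ((b:ℤ) - (a:ℤ)).natAbs < 2*p := by
    have := a.isLt; have := b.isLt; omega
  have h := arith h5 hpo ((b:ℤ) - (a:ℤ)) s t hst hk
  rw [hna] at h
  omega

lemma dist_eq (h5 : 5 ≤ p) (hpo : p % 2 = 1) (a b : Fin (2*p)) :
    (GG p).dist a b = F p (Nat.dist (a:ℕ) (b:ℕ)) :=
  le_antisymm (dist_le_F h5 hpo a b) (F_le_dist h5 hpo a b)

end Part3

namespace Part4
open TPaux Part2 Part3
variable {p : ℕ}

lemma eqF_two (h5 : 5 ≤ p) (hpo : p % 2 = 1) (u w : ℕ) (hu : u + 2 < 2*p) (hw : w < 2*p)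
    (h : F p (Nat.dist w u) = F p (Nat.dist w (u+2))) :
    w = u + 1 ∨ w = u + p + 3 ∨ w + p + 1 = u := by
  unfold F Nat.dist at h
  split_ifs at h <;> omega

lemma eqF_p (h5 : 5 ≤ p) (hpo : p % 2 = 1) (u w : ℕ) (hu : u + p < 2*p) (hw : w < 2*p)
    (h : F p (Nat.dist w u) = F p (Nat.dist w (u+p))) :
    w + 1 = u ∨ w = u + p + 1 := by
  unfold F Nat.dist at h
  split_ifs at h <;> omega

lemma card_le_two_of {n : ℕ} (s : Finset (Fin n)) (c1 c2 : Fin n)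
    (h : ∀ w ∈ s, w = c1 ∨ w = c2) : s.card ≤ 2 := by
  have hs : s ⊆ {c1, c2} := by
    intro w hw
    rcases h w hw with rfl | rfl <;> simp
  calc s.card ≤ ({c1, c2} : Finset (Fin n)).card := Finset.card_le_card hs
    _ ≤ 2 := by
        apply le_trans (Finset.card_insert_le _ _)
        simp

/-- the equidistant set of any edge has at most 2 elements -/
lemma card_eq_le (h5 : 5 ≤ p) (hpo : p % 2 = 1) {u v : Fin (2*p)}
    (h : (GG p).Adj u v) :
    (Finset.univ.filter (fun w : Fin (2*p) =>
      (GG p).dist w u = (GG p).dist w v)).card ≤ 2 := by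
  obtain ⟨hne, hd⟩ := adj_iff.mp h
  have hu := u.isLt
  have hv := v.isLt
  have hcases : ((v:ℕ) = u + 2 ∨ (u:ℕ) = v + 2) ∨ ((v:ℕ) = u + p ∨ (u:ℕ) = v + p) := by
    simp only [Nat.dist] at hd; omega
  rcases hcases with hc | hc
  · -- difference 2
    have key : ∀ (a b : Fin (2*p)), ∀ _hab : (b:ℕ) = (a:ℕ) + 2,
        ∀ w ∈ (Finset.univ.filter (fun w : Fin (2*p) =>
          (GG p).dist w a = (GG p).dist w b)),
          w = (⟨(a:ℕ) + 1, by have := b.isLt; omega⟩ : Fin (2*p)) ∨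
          w = (if h' : (a:ℕ) + p + 3 < 2*p then (⟨(a:ℕ) + p + 3, h'⟩ : Fin (2*p))
                else ⟨(a:ℕ) - p - 1, by have := a.isLt; omega⟩) := by
      intro a b hab w hw
      have hb := b.isLt
      rw [Finset.mem_filter] at hw
      have hdist := hw.2
      rw [dist_eq h5 hpo, dist_eq h5 hpo, hab] at hdist
      have h3 := eqF_two h5 hpo (a:ℕ) (w:ℕ) (by omega) w.isLt hdist
      rcases h3 with h3 | h3 | h3
      · left; exact Fin.ext (show (w:ℕ) = (a:ℕ) + 1 from h3)
      · right
        have h' : (a:ℕ) + p + 3 < 2*p := by have := w.isLt; omega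
        rw [dif_pos h']
        exact Fin.ext (show (w:ℕ) = (a:ℕ) + p + 3 from h3)
      · right
        rw [dif_neg (by omega)]
        exact Fin.ext (show (w:ℕ) = (a:ℕ) - p - 1 from by omega)
    rcases hc with hc | hc
    · exact card_le_two_of _ _ _ (key u v hc)
    · have hsymm : (Finset.univ.filter (fun w : Fin (2*p) =>
          (GG p).dist w u = (GG p).dist w v)) =
          (Finset.univ.filter (fun w : Fin (2*p) =>
          (GG p).dist w v = (GG p).dist w u)) := by
        apply Finset.filter_congr; intro w _; simp [eq_comm]
      rw [hsymm]
      exact card_le_two_of _ _ _ (key v u hc)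
  · -- difference p
    have key : ∀ (a b : Fin (2*p)), ∀ _hab : (b:ℕ) = (a:ℕ) + p,
        ∀ w ∈ (Finset.univ.filter (fun w : Fin (2*p) =>
          (GG p).dist w a = (GG p).dist w b)),
          w = (⟨(a:ℕ) - 1, by have := a.isLt; omega⟩ : Fin (2*p)) ∨
          w = (if h' : (a:ℕ) + p + 1 < 2*p then (⟨(a:ℕ) + p + 1, h'⟩ : Fin (2*p))
                else ⟨(a:ℕ) - 1, by have := a.isLt; omega⟩) := by
      intro a b hab w hw
      have hb := b.isLt
      rw [Finset.mem_filter] at hw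
      have hdist := hw.2
      rw [dist_eq h5 hpo, dist_eq h5 hpo, hab] at hdist
      have h3 := eqF_p h5 hpo (a:ℕ) (w:ℕ) (by omega) w.isLt hdist
      rcases h3 with h3 | h3
      · left; exact Fin.ext (show (w:ℕ) = (a:ℕ) - 1 from by omega)
      · right
        have h' : (a:ℕ) + p + 1 < 2*p := by have := w.isLt; omega
        rw [dif_pos h']
        exact Fin.ext (show (w:ℕ) = (a:ℕ) + p + 1 from h3)
    rcases hc with hc | hc
    · exact card_le_two_of _ _ _ (key u v hc)
    · have hsymm : (Finset.univ.filter (fun w : Fin (2*p) =>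
          (GG p).dist w u = (GG p).dist w v)) =
          (Finset.univ.filter (fun w : Fin (2*p) =>
          (GG p).dist w v = (GG p).dist w u)) := by
        apply Finset.filter_congr; intro w _; simp [eq_comm]
      rw [hsymm]
      exact card_le_two_of _ _ _ (key v u hc)

/-- the local resolving neighborhood of any edge has at least 2p-2 elements -/
lemma card_R_ge (h5 : 5 ≤ p) (hpo : p % 2 = 1) {u v : Fin (2*p)}
    (h : (GG p).Adj u v) :
    2*p - 2 ≤ (Finset.univ.filter (fun w : Fin (2*p) =>
      (GG p).dist w u ≠ (GG p).dist w v)).card := by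
  have h1 := card_eq_le h5 hpo h
  have h2 := Finset.card_filter_add_card_filter_not
    (s := (Finset.univ : Finset (Fin (2*p))))
    (p := fun w : Fin (2*p) => (GG p).dist w u = (GG p).dist w v)
  have h4 : (Finset.univ : Finset (Fin (2*p))).card = 2*p := by simp
  simp only [ne_eq]
  omega

/-- every vertex has an edge whose endpoints are equidistant from it -/
lemma exists_eq_edge (h5 : 5 ≤ p) (hpo : p % 2 = 1) (w : Fin (2*p)) :
    ∃ u v : Fin (2*p), (GG p).Adj u v ∧ (GG p).dist w u = (GG p).dist w v := by
  have hw := w.isLt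
  rcases eq_or_ne ((w:ℕ)) 0 with h0 | h0
  · -- w = 0 : edge (1, p+1)
    refine ⟨⟨1, by omega⟩, ⟨p+1, by omega⟩, adj_of h5 ?_, ?_⟩
    · right; simp only [Nat.dist]; omega
    · rw [dist_eq h5 hpo, dist_eq h5 hpo]
      simp only [F, Nat.dist, h0]
      split_ifs <;> first | exact absurd ‹False› not_false | omega
  rcases eq_or_ne ((w:ℕ)) (2*p-1) with h1 | h1
  · -- w = 2p-1 : edge (p-2, 2p-2)
    refine ⟨⟨p-2, by omega⟩, ⟨2*p-2, by omega⟩, adj_of h5 ?_, ?_⟩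
    · right; simp only [Nat.dist]; omega
    · rw [dist_eq h5 hpo, dist_eq h5 hpo]
      simp only [F, Nat.dist, h1]
      split_ifs <;> first | exact absurd ‹False› not_false | omega
  · -- middle : edge (w-1, w+1)
    refine ⟨⟨(w:ℕ)-1, by omega⟩, ⟨(w:ℕ)+1, by omega⟩, adj_of h5 ?_, ?_⟩
    · left; simp only [Nat.dist]; omega
    · rw [dist_eq h5 hpo, dist_eq h5 hpo]
      simp only [Nat.dist]
      unfold F Nat.dist
      split_ifs <;> first | exact absurd ‹False› not_false | omega

end Part4


open TPaux Part2 Part3 Part4 in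
theorem ldimf_toeplitz_two_p (p : ℕ) (hp : p.Prime) (hodd : Odd p) (h5 : 5 ≤ p) :
    2 * (p : ℝ) / (2 * (p : ℝ) - 1) ≤ ldimf (toeplitzGraph (2 * p) {2, p}) ∧
      ldimf (toeplitzGraph (2 * p) {2, p}) ≤ 2 * (p : ℝ) / (2 * (p : ℝ) - 2) ∧
      2 * (p : ℝ) / (2 * (p : ℝ) - 2) = (p : ℝ) / ((p : ℝ) - 1) := by
  have hpo : p % 2 = 1 := Nat.odd_iff.mp hodd
  have hpR : (5:ℝ) ≤ (p:ℝ) := by exact_mod_cast h5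
  set G := toeplitzGraph (2 * p) {2, p} with hG
  set S : Set ℝ := {s : ℝ | ∃ ζ : Fin (2*p) → ℝ, IsLocalResolvingFunction G ζ ∧ s = ∑ v, ζ v}
    with hS
  have hld : ldimf G = sInf S := rfl
  -- the constant function 1/(2p-2) is a local resolving function
  have hmem : (2*(p:ℝ)) / (2*(p:ℝ) - 2) ∈ S := by
    refine ⟨fun _ => 1 / (2*(p:ℝ) - 2), ⟨?_, ?_⟩, ?_⟩
    · intro w
      constructor
      · apply div_nonneg (by norm_num) (by linarith)
      · rw [div_le_one (by linarith)]; linarith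
    · intro u v huv
      rw [Finset.sum_const, nsmul_eq_mul]
      have hcard := card_R_ge h5 hpo (u := u) (v := v) huv
      have hcast : (2*(p:ℝ) - 2) ≤
          ((Finset.univ.filter (fun w : Fin (2*p) => G.dist w u ≠ G.dist w v)).card : ℝ) := by
        have h1 : ((2*p - 2 : ℕ) : ℝ) ≤ _ := Nat.cast_le.mpr hcard
        rw [Nat.cast_sub (by omega)] at h1
        push_cast at h1 ⊢
        convert h1 using 2
      calc (1:ℝ) = (2*(p:ℝ) - 2) * (1 / (2*(p:ℝ) - 2)) := by
            rw [mul_one_div, div_self (by linarith : (2*(p:ℝ) - 2) ≠ 0)]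
        _ ≤ _ := by
            apply mul_le_mul_of_nonneg_right hcast
            apply div_nonneg (by norm_num) (by linarith)
    · rw [Finset.sum_const, Finset.card_univ, Fintype.card_fin, nsmul_eq_mul]
      push_cast
      ring
  -- lower bound for every element of S
  have hlb : ∀ x ∈ S, 2*(p:ℝ)/(2*(p:ℝ)-1) ≤ x := by
    rintro x ⟨ζ, ⟨hζ01, hζres⟩, rfl⟩
    have key : ∀ w : Fin (2*p), 1 + ζ w ≤ ∑ v, ζ v := by
      intro w
      obtain ⟨u, v, huv, heq⟩ := exists_eq_edge h5 hpo w
      have h1 := hζres u v huv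
      have hsub : (Finset.univ.filter (fun x : Fin (2*p) => G.dist x u ≠ G.dist x v)) ⊆
          Finset.univ.erase w := by
        intro x hx
        rw [Finset.mem_erase]
        refine ⟨?_, Finset.mem_univ x⟩
        rintro rfl
        exact (Finset.mem_filter.mp hx).2 heq
      have h2 : ∑ x ∈ Finset.univ.filter (fun x : Fin (2*p) => G.dist x u ≠ G.dist x v), ζ x ≤
          ∑ x ∈ Finset.univ.erase w, ζ x :=
        Finset.sum_le_sum_of_subset_of_nonneg hsub (fun i _ _ => (hζ01 i).1)
      have h3 : ζ w + ∑ x ∈ Finset.univ.erase w, ζ x = ∑ v, ζ v :=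
        Finset.add_sum_erase _ ζ (Finset.mem_univ w)
      linarith
    have hsum : ∑ w : Fin (2*p), (1 + ζ w) ≤ ∑ _w : Fin (2*p), ∑ v, ζ v :=
      Finset.sum_le_sum (fun w _ => key w)
    rw [Finset.sum_add_distrib, Finset.sum_const, Finset.sum_const, Finset.card_univ,
      Fintype.card_fin, nsmul_eq_mul, nsmul_eq_mul] at hsum
    push_cast at hsum
    rw [div_le_iff₀ (by linarith : (0:ℝ) < 2*(p:ℝ)-1)]
    nlinarith [hsum]
  refine ⟨?_, ?_, ?_⟩
  · rw [hld]
    exact le_csInf ⟨_, hmem⟩ hlb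
  · rw [hld]
    exact csInf_le ⟨2*(p:ℝ)/(2*(p:ℝ)-1), fun x hx => hlb x hx⟩ hmem
  · rw [div_eq_div_iff (by linarith) (by linarith)]
    ring
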